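/- Let Λ be a finite set, π a probability measure on Λ, and D = (ψ_λ)_{λ∈Λ} measurable functions with Var_P(ψ_λ²) < ∞. For each λ, let B_λ be a regular partition of {1,...,n} with V_λ = card(B_λ) ≥ ln(4/(π(λ)δ)) blocks, and assume L_1 (√(Var_P ψ_λ²)/Pψ_λ²) √(V_λ/n) ≤ 1/2 whenever Pψ_λ² ≠ 0. Then with probability at least 1 − δ, simultaneously for all λ ∈ Λ: |P̄_{B_λ} ψ_λ − Pψ_λ| ≤ L_2 √(P̄_{B_λ} ψ_λ²) √(V_λ/n), where L_2 = √2 L_1. -/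

import Mathlib

open MeasureTheory ProbabilityTheory Finset
open scoped ENNReal NNReal

private lemma mom_prod {Ω : Type*} [MeasurableSpace Ω]
    (μ : Measure Ω) [IsProbabilityMeasure μ]
    {n V : ℕ} (Y : Fin n → Ω → ℝ) (hYmeas : ∀ i, Measurable (Y i))
    (hindep : iIndepFun Y μ)
    (B : Fin V → Finset (Fin n)) (hdisj : Pairwise fun K K' => Disjoint (B K) (B K'))
    (r : Fin V → ℝ) (t : Fin V → Set ℝ) (htm : ∀ K, MeasurableSet (t K)) :
    ∀ S : Finset (Fin V),
      μ (⋂ K ∈ S, (fun ω => r K * ∑ i ∈ B K, Y i ω) ⁻¹' t K)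
        = ∏ K ∈ S, μ ((fun ω => r K * ∑ i ∈ B K, Y i ω) ⁻¹' t K) := by
  intro S
  classical
  induction S using Finset.induction_on with
  | empty => simp
  | @insert K0 S hK0 ih =>
    have hdisj2 : Disjoint (B K0) (S.biUnion B) := by
      rw [Finset.disjoint_biUnion_right]
      exact fun K hK => hdisj (fun h => hK0 (h ▸ hK))
    have hIF := hindep.indepFun_finset (B K0) (S.biUnion B) hdisj2 hYmeas
    set g1 : Ω → (↥(B K0) → ℝ) := fun ω (i : ↥(B K0)) => Y i ω with hg1
    set g2 : Ω → (↥(S.biUnion B) → ℝ) := fun ω (i : ↥(S.biUnion B)) => Y i ω with hg2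
    set φ1 : (↥(B K0) → ℝ) → ℝ := fun v => r K0 * ∑ i, v i with hφ1
    set Φ : (↥(S.biUnion B) → ℝ) → (↥S → ℝ) :=
      fun v K => r K.1 * ∑ j : ↥(S.biUnion B),
        if (j : Fin n) ∈ B K.1 then v j else 0 with hΦ
    have hφ1m : Measurable φ1 := by
      apply Measurable.const_mul
      exact Finset.measurable_sum _ fun i _ => measurable_pi_apply i
    have hΦm : Measurable Φ := by
      apply measurable_pi_lambda
      intro K
      apply Measurable.const_mul
      apply Finset.measurable_sum
      intro j _
      by_cases h : (j : Fin n) ∈ B K.1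
      · simpa [h] using measurable_pi_apply j
      · simp [h]
    have hcomp := hIF.comp hφ1m hΦm
    have hZ0 : (fun ω => r K0 * ∑ i ∈ B K0, Y i ω) = φ1 ∘ g1 := by
      funext ω
      simp only [hφ1, hg1, Function.comp_apply]
      rw [← Finset.sum_coe_sort (B K0) (fun i => Y i ω)]
    have hZK : ∀ K : ↥S, (fun ω => r K.1 * ∑ i ∈ B K.1, Y i ω) = fun ω => Φ (g2 ω) K := by
      intro K
      funext ω
      simp only [hΦ, hg2]
      congr 1
      rw [Finset.sum_coe_sort (S.biUnion B)
        (fun j => if j ∈ B K.1 then Y j ω else 0)]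
      rw [Finset.sum_ite_mem, Finset.inter_eq_right.2
        (fun j hj => Finset.mem_biUnion.2 ⟨K.1, K.2, hj⟩)]
    have hsets : (⋂ K ∈ S, (fun ω => r K * ∑ i ∈ B K, Y i ω) ⁻¹' t K)
        = (Φ ∘ g2) ⁻¹' (Set.univ.pi fun K : ↥S => t K.1) := by
      ext ω
      simp only [Set.mem_iInter, Set.mem_preimage, Function.comp_apply, Set.mem_univ_pi]
      constructor
      · intro h K
        have h2 := h K.1 K.2
        have h3 := congrFun (hZK K) ω
        rw [← h3]
        exact h2
      · intro h K hK
        have h2 := h ⟨K, hK⟩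
        have h3 := congrFun (hZK ⟨K, hK⟩) ω
        rw [h3]
        exact h2
    rw [Finset.set_biInter_insert, Finset.prod_insert hK0, ← ih, hsets, hZ0]
    exact hcomp.measure_inter_preimage_eq_mul (t K0)
      (Set.univ.pi fun K : ↥S => t K.1) (htm K0)
      (MeasurableSet.univ_pi fun K => htm K.1)


open scoped Classical in
private lemma mom_select {Ω : Type*} [MeasurableSpace Ω] (μ : Measure Ω)
    {V : ℕ} (A : Fin V → Set Ω) {q : ℝ} (hq : 0 ≤ q)
    (hprod : ∀ S : Finset (Fin V), μ (⋂ K ∈ S, A K) = ∏ K ∈ S, μ (A K))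
    (hA : ∀ K, μ (A K) ≤ ENNReal.ofReal q) :
    μ {ω | (V : ℝ) ≤ 2 * (Finset.univ.filter (fun K => ω ∈ A K)).card}
      ≤ ENNReal.ofReal ((V.choose ((V + 1) / 2)) * q ^ ((V + 1) / 2)) := by
  classical
  set m : ℕ := (V + 1) / 2 with hm
  have hsub : {ω | (V : ℝ) ≤ 2 * (Finset.univ.filter (fun K => ω ∈ A K)).card}
      ⊆ ⋃ S ∈ Finset.univ.powersetCard m, ⋂ K ∈ S, A K := by
    intro ω hω
    have h1 : (V : ℝ) ≤ 2 * (Finset.univ.filter (fun K => ω ∈ A K)).card := hω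
    have h2 : V ≤ 2 * (Finset.univ.filter (fun K => ω ∈ A K)).card := by
      exact_mod_cast h1
    have h3 : m ≤ (Finset.univ.filter (fun K => ω ∈ A K)).card := by omega
    obtain ⟨S, hS, hScard⟩ := Finset.exists_subset_card_eq h3
    exact Set.mem_iUnion₂.2 ⟨S, Finset.mem_powersetCard.2 ⟨Finset.subset_univ S, hScard⟩,
      Set.mem_iInter₂.2 fun K hK => (Finset.mem_filter.1 (hS hK)).2⟩
  calc μ {ω | (V : ℝ) ≤ 2 * (Finset.univ.filter (fun K => ω ∈ A K)).card}
      ≤ μ (⋃ S ∈ Finset.univ.powersetCard m, ⋂ K ∈ S, A K) := measure_mono hsub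
    _ ≤ ∑ S ∈ Finset.univ.powersetCard m, μ (⋂ K ∈ S, A K) :=
        measure_biUnion_finset_le _ _
    _ ≤ ∑ _S ∈ Finset.univ.powersetCard m, ENNReal.ofReal q ^ m := by
        refine Finset.sum_le_sum fun S hS => ?_
        rw [hprod S]
        have hcard : S.card = m := (Finset.mem_powersetCard.1 hS).2
        calc ∏ K ∈ S, μ (A K) ≤ ENNReal.ofReal q ^ S.card :=
              Finset.prod_le_pow_card _ _ _ fun K _ => hA K
          _ = ENNReal.ofReal q ^ m := by rw [hcard]
    _ = (Finset.univ.powersetCard m).card • ENNReal.ofReal q ^ m := by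
        rw [Finset.sum_const]
    _ = ENNReal.ofReal ((V.choose m) * q ^ m) := by
        rw [Finset.card_powersetCard, Finset.card_univ, Fintype.card_fin,
          nsmul_eq_mul, ENNReal.ofReal_mul (Nat.cast_nonneg _), ENNReal.ofReal_pow hq,
          ENNReal.ofReal_natCast]

private lemma mom_numeric {V : ℕ} (hV : 0 < V) :
    (V.choose ((V + 1) / 2) : ℝ) * (1 / (12 * Real.exp 1)) ^ ((V + 1) / 2)
      ≤ Real.exp (-(V : ℝ)) := by
  set m : ℕ := (V + 1) / 2 with hm
  have he : (0 : ℝ) < Real.exp 1 := Real.exp_pos 1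
  have he1 : (1 : ℝ) ≤ Real.exp 1 := Real.one_le_exp (by norm_num)
  have hchoose : (V.choose m : ℝ) ≤ 2 ^ V := by
    have h1 : V.choose m ≤ 2 ^ V := by
      calc V.choose m ≤ ∑ k ∈ Finset.range (V + 1), V.choose k :=
            Finset.single_le_sum (f := fun k => V.choose k) (fun k _ => Nat.zero_le _)
              (Finset.mem_range.2 (by omega))
        _ = 2 ^ V := Nat.sum_range_choose V
    exact_mod_cast h1
  have hbase : (2 * Real.exp 1) ^ 2 ≤ 12 * Real.exp 1 := by
    have h3 : Real.exp 1 ≤ 3 := by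
      have := Real.exp_one_lt_d9
      linarith
    nlinarith
  have h2m : V ≤ 2 * m := by omega
  have hkey : 2 ^ V * Real.exp 1 ^ V ≤ (12 * Real.exp 1) ^ m := by
    calc 2 ^ V * Real.exp 1 ^ V = (2 * Real.exp 1) ^ V := (mul_pow 2 (Real.exp 1) V).symm
      _ ≤ (2 * Real.exp 1) ^ (2 * m) := by
          apply pow_le_pow_right₀ (by nlinarith [he1]) h2m
      _ = ((2 * Real.exp 1) ^ 2) ^ m := by rw [pow_mul]
      _ ≤ (12 * Real.exp 1) ^ m := by
          apply pow_le_pow_left₀ (by positivity) hbase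
  have hexpV : Real.exp (-(V : ℝ)) = (Real.exp 1 ^ V)⁻¹ := by
    rw [Real.exp_neg, Real.exp_one_pow]
  have h12 : (0 : ℝ) < (12 * Real.exp 1) ^ m := by positivity
  have heV : (0 : ℝ) < Real.exp 1 ^ V := by positivity
  have hpow : (1 / (12 * Real.exp 1)) ^ m = 1 / (12 * Real.exp 1) ^ m := by
    rw [div_pow, one_pow]
  rw [hexpV, hpow, inv_eq_one_div, mul_one_div, div_le_div_iff₀ h12 heV, one_mul]
  nlinarith [hchoose, hkey, heV.le, mul_le_mul_of_nonneg_right hchoose heV.le]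

open scoped Classical in
private lemma mom_onesided {Ω E : Type*} [MeasurableSpace Ω] [MeasurableSpace E]
    (μ : Measure Ω) [IsProbabilityMeasure μ]
    {n : ℕ} (hn : 0 < n) (X : Fin n → Ω → E) (hXmeas : ∀ i, Measurable (X i))
    (hindep : iIndepFun X μ)
    (P : Measure E) (hid : ∀ i, Measure.map (X i) μ = P)
    (φ : E → ℝ) (hφm : Measurable φ) (hφ2 : MemLp φ 2 P)
    {V : ℕ} (hV : 0 < V) (hVn : (V : ℝ) ≤ (n : ℝ) / 2)
    (B : Fin V → Finset (Fin n))
    (hdisj : Pairwise fun K K' => Disjoint (B K) (B K'))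
    (hreg : ∀ K, |((B K).card : ℝ) - (n : ℝ) / V| ≤ 1)
    (t : Set ℝ) (htm : MeasurableSet t)
    (ht : ∀ x ∈ t, 2 * Real.sqrt (6 * Real.exp 1) * Real.sqrt (variance φ P) *
        Real.sqrt ((V : ℝ) / n) < |x - ∫ y, φ y ∂P|) :
    μ {ω | (V : ℝ) ≤ 2 * (Finset.univ.filter
        (fun K => ((B K).card : ℝ)⁻¹ * ∑ i ∈ B K, φ (X i ω) ∈ t)).card}
      ≤ ENNReal.ofReal (Real.exp (-(V : ℝ))) := by
  classical
  have hPprob : IsProbabilityMeasure P := by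
    rw [← hid ⟨0, hn⟩]
    exact Measure.isProbabilityMeasure_map (hXmeas _).aemeasurable
  have hnR : (0 : ℝ) < n := Nat.cast_pos.2 hn
  have hVR : (0 : ℝ) < V := Nat.cast_pos.2 hV
  have hnV : (2 : ℝ) ≤ (n : ℝ) / V := by
    rw [le_div_iff₀ hVR]; linarith
  -- block size bounds
  have hcardlow : ∀ K, (n : ℝ) / (2 * V) ≤ ((B K).card : ℝ) := by
    intro K
    have h1 := (abs_le.1 (hreg K)).1
    have : (n : ℝ) / (2 * V) = (n : ℝ) / V / 2 := by ring
    rw [this]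
    linarith [hnV]
  have hcardpos : ∀ K, (0 : ℝ) < ((B K).card : ℝ) := by
    intro K
    have := hcardlow K
    have h0 : (0 : ℝ) < (n : ℝ) / (2 * V) := by positivity
    linarith
  have hinv : ∀ K, (((B K).card : ℝ))⁻¹ ≤ 2 * V / n := by
    intro K
    rw [inv_le_comm₀ (hcardpos K) (by positivity)]
    calc (2 * (V : ℝ) / n)⁻¹ = (n : ℝ) / (2 * V) := by
          rw [inv_div]
      _ ≤ _ := hcardlow K
  -- the composed i.i.d. variables
  set Y : Fin n → Ω → ℝ := fun i ω => φ (X i ω) with hY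
  have hYmeas : ∀ i, Measurable (Y i) := fun i => hφm.comp (hXmeas i)
  have hYindep : iIndepFun Y μ :=
    hindep.comp (fun _ => φ) (fun _ => hφm)
  have hmp : ∀ i, MeasurePreserving (X i) μ P := fun i => ⟨hXmeas i, hid i⟩
  have hY2 : ∀ i, MemLp (Y i) 2 μ := fun i => hφ2.comp_measurePreserving (hmp i)
  have hYint : ∀ i, ∫ ω, Y i ω ∂μ = ∫ y, φ y ∂P := by
    intro i
    rw [← hid i, integral_map (hXmeas i).aemeasurable
      (hφm.aestronglyMeasurable.mono_ac (Measure.map (X i) μ).absolutelyContinuous_refl)]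
  have hYvar : ∀ i, variance (Y i) μ = variance φ P := by
    intro i
    rw [variance_eq_sub (hY2 i), variance_eq_sub hφ2]
    congr 1
    · simp only [Pi.pow_apply]
      rw [← hid i, integral_map (hXmeas i).aemeasurable]
      exact ((hφm.pow_const 2).aestronglyMeasurable.mono_ac
        (Measure.map (X i) μ).absolutelyContinuous_refl)
    · rw [hYint i]
  set m0 : ℝ := ∫ y, φ y ∂P with hm0
  set σ2 : ℝ := variance φ P with hσ2
  have hσ2nn : 0 ≤ σ2 := variance_nonneg _ _
  -- block mean properties
  set Z : Fin V → Ω → ℝ := fun K ω => ((B K).card : ℝ)⁻¹ * ∑ i ∈ B K, Y i ω with hZdef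
  have hSne : ∀ K, ((B K).card : ℝ) ≠ 0 := fun K => (hcardpos K).ne'
  have hZfun : ∀ K, Z K = fun ω => ((B K).card : ℝ)⁻¹ * (∑ i ∈ B K, Y i) ω := by
    intro K; funext ω; simp [hZdef, Finset.sum_apply]
  have hZ2 : ∀ K, MemLp (Z K) 2 μ := by
    intro K
    rw [hZfun K]
    exact (memLp_finset_sum' _ fun i _ => hY2 i).const_mul _
  have hZmean : ∀ K, ∫ ω, Z K ω ∂μ = m0 := by
    intro K
    simp only [hZdef]
    rw [integral_const_mul, integral_finset_sum _ fun i _ => (hY2 i).integrable one_le_two]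
    simp only [hYint]
    rw [Finset.sum_const, nsmul_eq_mul]
    exact inv_mul_cancel_left₀ (hSne K) m0
  have hZvar : ∀ K, variance (Z K) μ = (((B K).card : ℝ))⁻¹ * σ2 := by
    intro K
    rw [hZfun K]
    rw [variance_const_mul]  -- might need (fun ω => c * X ω) form
    rw [IndepFun.variance_sum (fun i _ => hY2 i)
      (fun i _ j _ hij => hYindep.indepFun hij)]
    simp only [hYvar]
    rw [Finset.sum_const, nsmul_eq_mul]
    have h : (((B K).card : ℝ))⁻¹ ^ 2 * ((B K).card * σ2) = (((B K).card : ℝ))⁻¹ * σ2 := by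
      rw [pow_two, mul_assoc, inv_mul_cancel_left₀ (hSne K)]
    rw [h]
  -- per-block probability bound
  set q : ℝ := 1 / (12 * Real.exp 1) with hq
  have hqnn : 0 ≤ q := by positivity
  set ε : ℝ := 2 * Real.sqrt (6 * Real.exp 1) * Real.sqrt σ2 * Real.sqrt ((V : ℝ) / n)
    with hε
  have hA : ∀ K, μ ((fun ω => ((B K).card : ℝ)⁻¹ * ∑ i ∈ B K, Y i ω) ⁻¹' t)
      ≤ ENNReal.ofReal q := by
    intro K
    have hZel : ∀ ω, ((B K).card : ℝ)⁻¹ * ∑ i ∈ B K, Y i ω = Z K ω := fun ω => rfl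
    by_cases hσ : σ2 = 0
    · have hvz : variance (Z K) μ = 0 := by rw [hZvar K, hσ, mul_zero]
      have hev : evariance (Z K) μ = 0 := by
        rw [← (hZ2 K).ofReal_variance_eq, hvz, ENNReal.ofReal_zero]
      have hae : ∀ᵐ ω ∂μ, Z K ω = m0 := by
        have h1 := (evariance_eq_zero_iff ((hZ2 K).aestronglyMeasurable.aemeasurable)).1 hev
        filter_upwards [h1] with ω hω
        rw [hω, hZmean K]
      have hsub : (fun ω => ((B K).card : ℝ)⁻¹ * ∑ i ∈ B K, Y i ω) ⁻¹' t
          ⊆ {ω | ¬ Z K ω = m0} := by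
        intro ω hω
        have h2 : ε < |Z K ω - m0| := ht _ hω
        have hεz : ε = 0 := by rw [hε, hσ, Real.sqrt_zero, mul_zero, zero_mul]
        simp only [Set.mem_setOf_eq]
        intro hc
        rw [hc, sub_self, abs_zero, hεz] at h2
        exact lt_irrefl _ h2
      calc μ _ ≤ μ {ω | ¬ Z K ω = m0} := measure_mono hsub
        _ = 0 := ae_iff.1 hae
        _ ≤ ENNReal.ofReal q := by simp
    · have hσpos : 0 < σ2 := lt_of_le_of_ne hσ2nn (Ne.symm hσ)
      have hεpos : 0 < ε := by
        rw [hε]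
        have h1 : 0 < Real.sqrt (6 * Real.exp 1) := Real.sqrt_pos.2 (by positivity)
        have h2 : 0 < Real.sqrt σ2 := Real.sqrt_pos.2 hσpos
        have h3 : 0 < Real.sqrt ((V : ℝ) / n) := Real.sqrt_pos.2 (by positivity)
        positivity
      have hsub : (fun ω => ((B K).card : ℝ)⁻¹ * ∑ i ∈ B K, Y i ω) ⁻¹' t
          ⊆ {ω | ε ≤ |Z K ω - ∫ x, Z K x ∂μ|} := by
        intro ω hω
        have h2 : ε < |Z K ω - m0| := ht _ hω
        simp only [Set.mem_setOf_eq]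
        rw [hZmean K]
        exact h2.le
      have hcheb := meas_ge_le_variance_div_sq (hZ2 K) hεpos
      have hε2 : ε ^ 2 = 4 * (6 * Real.exp 1) * σ2 * ((V : ℝ) / n) := by
        rw [hε, mul_pow, mul_pow, mul_pow, Real.sq_sqrt hσ2nn,
          Real.sq_sqrt (by positivity : (0 : ℝ) ≤ (V : ℝ) / n),
          Real.sq_sqrt (by positivity : (0 : ℝ) ≤ 6 * Real.exp 1)]
        ring
      have hvle : variance (Z K) μ ≤ 2 * (V : ℝ) / n * σ2 := by
        rw [hZvar K]
        exact mul_le_mul_of_nonneg_right (hinv K) hσ2nn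
      have hqeq : (2 * (V : ℝ) / n * σ2) / ε ^ 2 = q := by
        rw [hε2, hq]
        have he0 : Real.exp 1 ≠ 0 := Real.exp_ne_zero 1
        field_simp
        ring
      have hdiv : variance (Z K) μ / ε ^ 2 ≤ q := by
        rw [← hqeq]
        gcongr
      calc μ _ ≤ μ {ω | ε ≤ |Z K ω - ∫ x, Z K x ∂μ|} := measure_mono hsub
        _ ≤ ENNReal.ofReal (variance (Z K) μ / ε ^ 2) := hcheb
        _ ≤ ENNReal.ofReal q := ENNReal.ofReal_le_ofReal hdiv
  have hprod := mom_prod μ Y hYmeas hYindep B hdisj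
    (fun K => (((B K).card : ℝ))⁻¹) (fun _ => t) (fun _ => htm)
  have hsel := mom_select μ
    (fun K => (fun ω => ((B K).card : ℝ)⁻¹ * ∑ i ∈ B K, Y i ω) ⁻¹' t) hqnn hprod hA
  have hset : {ω | (V : ℝ) ≤ 2 * (Finset.univ.filter
        (fun K => ((B K).card : ℝ)⁻¹ * ∑ i ∈ B K, φ (X i ω) ∈ t)).card}
      = {ω | (V : ℝ) ≤ 2 * (Finset.univ.filter (fun K =>
          ω ∈ (fun ω' => ((B K).card : ℝ)⁻¹ * ∑ i ∈ B K, Y i ω') ⁻¹' t)).card} := by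
    ext ω
    simp only [Set.mem_setOf_eq, Set.mem_preimage, hY]
  rw [hset]
  exact hsel.trans (ENNReal.ofReal_le_ofReal (by rw [hq] at *; exact mom_numeric hV))


theorem simultaneous_median_of_means_deviation
    {Ω E Λ : Type*} [MeasurableSpace Ω] [MeasurableSpace E] [Fintype Λ]
    (μ : Measure Ω) [IsProbabilityMeasure μ]
    (n : ℕ) (hn : 0 < n)
    (X : Fin n → Ω → E) (hXmeas : ∀ i, Measurable (X i))
    (hindep : iIndepFun X μ)
    (P : Measure E) (hid : ∀ i, Measure.map (X i) μ = P)
    (π : Λ → ℝ) (hπpos : ∀ l, 0 < π l) (hπsum : ∑ l, π l = 1)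
    (ψ : Λ → E → ℝ) (hψ : ∀ l, Measurable (ψ l))
    (hψ4 : ∀ l, MemLp (fun x => (ψ l x) ^ 2) 2 P)
    (δ : ℝ) (hδ : δ ∈ Set.Ioo (0 : ℝ) 1)
    (Vl : Λ → ℕ) (hVpos : ∀ l, 0 < Vl l)
    (hVlow : ∀ l, Real.log (4 / (π l * δ)) ≤ (Vl l : ℝ))
    (hVup : ∀ l, (Vl l : ℝ) ≤ (n : ℝ) / 2)
    (B : (l : Λ) → Fin (Vl l) → Finset (Fin n))
    (hdisj : ∀ l, Pairwise (fun K K' => Disjoint (B l K) (B l K')))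
    (hcover : ∀ l, Finset.univ.biUnion (B l) = Finset.univ)
    (hreg : ∀ l K, |((B l K).card : ℝ) - (n : ℝ) / (Vl l)| ≤ 1)
    (hCD : ∀ l, ∫ x, (ψ l x) ^ 2 ∂P ≠ 0 →
      (2 * Real.sqrt (6 * Real.exp 1)) *
          (Real.sqrt (variance (fun x => (ψ l x) ^ 2) P) / ∫ x, (ψ l x) ^ 2 ∂P) *
          Real.sqrt ((Vl l : ℝ) / n) ≤ 1 / 2)
    (medψ medψ2 : Λ → Ω → ℝ)
    (hmedψ : ∀ l ω,
      (Vl l : ℝ) ≤ 2 * (Finset.univ.filter (fun K =>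
          ((B l K).card : ℝ)⁻¹ * ∑ i ∈ B l K, ψ l (X i ω) ≤ medψ l ω)).card ∧
      (Vl l : ℝ) ≤ 2 * (Finset.univ.filter (fun K =>
          medψ l ω ≤ ((B l K).card : ℝ)⁻¹ * ∑ i ∈ B l K, ψ l (X i ω))).card)
    (hmedψ2 : ∀ l ω,
      (Vl l : ℝ) ≤ 2 * (Finset.univ.filter (fun K =>
          ((B l K).card : ℝ)⁻¹ * ∑ i ∈ B l K, (ψ l (X i ω)) ^ 2 ≤ medψ2 l ω)).card ∧
      (Vl l : ℝ) ≤ 2 * (Finset.univ.filter (fun K =>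
          medψ2 l ω ≤ ((B l K).card : ℝ)⁻¹ * ∑ i ∈ B l K, (ψ l (X i ω)) ^ 2)).card) :
    1 - ENNReal.ofReal δ ≤
      μ {ω | ∀ l, |medψ l ω - ∫ x, ψ l x ∂P| ≤
        (Real.sqrt 2 * (2 * Real.sqrt (6 * Real.exp 1))) *
          Real.sqrt (medψ2 l ω) * Real.sqrt ((Vl l : ℝ) / n)} := by
  classical
  have hPprob : IsProbabilityMeasure P := by
    rw [← hid ⟨0, hn⟩]
    exact Measure.isProbabilityMeasure_map (hXmeas _).aemeasurable
  have hψ2 : ∀ l, MemLp (ψ l) 2 P := by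
    intro l
    rw [memLp_two_iff_integrable_sq (hψ l).aestronglyMeasurable]
    exact (hψ4 l).integrable one_le_two
  -- notation
  set L1 : ℝ := 2 * Real.sqrt (6 * Real.exp 1) with hL1
  have hL1nn : 0 ≤ L1 := by positivity
  -- bad events
  let Bad1 : Λ → Set Ω := fun l => {ω | (Vl l : ℝ) ≤ 2 * (Finset.univ.filter
      (fun K => ((B l K).card : ℝ)⁻¹ * ∑ i ∈ B l K, ψ l (X i ω)
        ∈ Set.Ioi ((∫ x, ψ l x ∂P) + L1 * Real.sqrt (variance (ψ l) P) *
          Real.sqrt ((Vl l : ℝ) / n)))).card}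
  let Bad2 : Λ → Set Ω := fun l => {ω | (Vl l : ℝ) ≤ 2 * (Finset.univ.filter
      (fun K => ((B l K).card : ℝ)⁻¹ * ∑ i ∈ B l K, ψ l (X i ω)
        ∈ Set.Iio ((∫ x, ψ l x ∂P) - L1 * Real.sqrt (variance (ψ l) P) *
          Real.sqrt ((Vl l : ℝ) / n)))).card}
  let Bad3 : Λ → Set Ω := fun l => {ω | (Vl l : ℝ) ≤ 2 * (Finset.univ.filter
      (fun K => ((B l K).card : ℝ)⁻¹ * ∑ i ∈ B l K, (fun x => ψ l x ^ 2) (X i ω)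
        ∈ Set.Iio ((∫ x, (fun x => ψ l x ^ 2) x ∂P) -
          L1 * Real.sqrt (variance (fun x => ψ l x ^ 2) P) *
          Real.sqrt ((Vl l : ℝ) / n)))).card}
  have hB1 : ∀ l, μ (Bad1 l) ≤ ENNReal.ofReal (Real.exp (-(Vl l : ℝ))) := by
    intro l
    refine mom_onesided μ hn X hXmeas hindep P hid (ψ l) (hψ l) (hψ2 l)
      (hVpos l) (hVup l) (B l) (hdisj l) (hreg l) _ measurableSet_Ioi ?_
    intro x hx
    rw [Set.mem_Ioi] at hx
    have h1 : x - ∫ y, ψ l y ∂P ≤ |x - ∫ y, ψ l y ∂P| := le_abs_self _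
    rw [← hL1]
    linarith
  have hB2 : ∀ l, μ (Bad2 l) ≤ ENNReal.ofReal (Real.exp (-(Vl l : ℝ))) := by
    intro l
    refine mom_onesided μ hn X hXmeas hindep P hid (ψ l) (hψ l) (hψ2 l)
      (hVpos l) (hVup l) (B l) (hdisj l) (hreg l) _ measurableSet_Iio ?_
    intro x hx
    rw [Set.mem_Iio] at hx
    have h1 : -(x - ∫ y, ψ l y ∂P) ≤ |x - ∫ y, ψ l y ∂P| := neg_le_abs _
    rw [← hL1]
    linarith
  have hB3 : ∀ l, μ (Bad3 l) ≤ ENNReal.ofReal (Real.exp (-(Vl l : ℝ))) := by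
    intro l
    refine mom_onesided μ hn X hXmeas hindep P hid (fun x => ψ l x ^ 2)
      ((hψ l).pow_const 2) (hψ4 l)
      (hVpos l) (hVup l) (B l) (hdisj l) (hreg l) _ measurableSet_Iio ?_
    intro x hx
    rw [Set.mem_Iio] at hx
    have h1 : -(x - ∫ y, ψ l y ^ 2 ∂P) ≤ |x - ∫ y, ψ l y ^ 2 ∂P| := neg_le_abs _
    rw [← hL1]
    simp only at hx ⊢
    linarith
  -- per-l real bound
  have hreal : ∀ l, 3 * Real.exp (-(Vl l : ℝ)) ≤ π l * δ := by
    intro l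
    have hπδ : 0 < π l * δ := mul_pos (hπpos l) hδ.1
    have h4 : 4 / (π l * δ) ≤ Real.exp (Vl l : ℝ) := by
      rw [← Real.exp_log (show (0 : ℝ) < 4 / (π l * δ) by positivity)]
      exact Real.exp_le_exp.2 (hVlow l)
    rw [div_le_iff₀ hπδ] at h4
    have hVexp : (0 : ℝ) < Real.exp (Vl l : ℝ) := Real.exp_pos _
    have h6 := mul_le_mul_of_nonneg_right h4 (inv_nonneg.2 hVexp.le)
    rw [mul_comm (Real.exp (Vl l : ℝ)) (π l * δ), mul_assoc,
      mul_inv_cancel₀ hVexp.ne', mul_one] at h6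
    rw [Real.exp_neg]
    have hinvnn : (0 : ℝ) ≤ (Real.exp (Vl l : ℝ))⁻¹ := inv_nonneg.2 hVexp.le
    linarith
  -- pointwise: not bad implies the deviation bound
  have hgood : ∀ l ω, ω ∉ Bad1 l → ω ∉ Bad2 l → ω ∉ Bad3 l →
      |medψ l ω - ∫ x, ψ l x ∂P| ≤
        (Real.sqrt 2 * L1) * Real.sqrt (medψ2 l ω) * Real.sqrt ((Vl l : ℝ) / n) := by
    intro l ω h1 h2 h3
    set m0 : ℝ := ∫ x, ψ l x ∂P with hm0
    set m2 : ℝ := ∫ x, ψ l x ^ 2 ∂P with hm2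
    set sl : ℝ := Real.sqrt ((Vl l : ℝ) / n) with hsl
    set ε1 : ℝ := L1 * Real.sqrt (variance (ψ l) P) * sl with hε1
    set ε2 : ℝ := L1 * Real.sqrt (variance (fun x => ψ l x ^ 2) P) * sl with hε2
    have hslnn : 0 ≤ sl := Real.sqrt_nonneg _
    -- median bounds from non-badness
    have hup : medψ l ω ≤ m0 + ε1 := by
      by_contra hcon
      push_neg at hcon
      apply h1
      have hmono : (Finset.univ.filter (fun K =>
            medψ l ω ≤ ((B l K).card : ℝ)⁻¹ * ∑ i ∈ B l K, ψ l (X i ω))).card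
          ≤ (Finset.univ.filter (fun K => ((B l K).card : ℝ)⁻¹ * ∑ i ∈ B l K, ψ l (X i ω)
            ∈ Set.Ioi (m0 + ε1))).card := by
        apply Finset.card_le_card
        apply Finset.monotone_filter_right
        intro K _ hK
        rw [Set.mem_Ioi]
        linarith
      refine le_trans (hmedψ l ω).2 ?_
      have : ((Finset.univ.filter (fun K =>
          medψ l ω ≤ ((B l K).card : ℝ)⁻¹ * ∑ i ∈ B l K, ψ l (X i ω))).card : ℝ)
          ≤ ((Finset.univ.filter (fun K => ((B l K).card : ℝ)⁻¹ * ∑ i ∈ B l K, ψ l (X i ω)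
            ∈ Set.Ioi (m0 + ε1))).card : ℝ) := Nat.cast_le.2 hmono
      linarith
    have hlow : m0 - ε1 ≤ medψ l ω := by
      by_contra hcon
      push_neg at hcon
      apply h2
      have hmono : (Finset.univ.filter (fun K =>
            ((B l K).card : ℝ)⁻¹ * ∑ i ∈ B l K, ψ l (X i ω) ≤ medψ l ω)).card
          ≤ (Finset.univ.filter (fun K => ((B l K).card : ℝ)⁻¹ * ∑ i ∈ B l K, ψ l (X i ω)
            ∈ Set.Iio (m0 - ε1))).card := by
        apply Finset.card_le_card
        apply Finset.monotone_filter_right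
        intro K _ hK
        rw [Set.mem_Iio]
        linarith
      refine le_trans (hmedψ l ω).1 ?_
      have : ((Finset.univ.filter (fun K =>
          ((B l K).card : ℝ)⁻¹ * ∑ i ∈ B l K, ψ l (X i ω) ≤ medψ l ω)).card : ℝ)
          ≤ ((Finset.univ.filter (fun K => ((B l K).card : ℝ)⁻¹ * ∑ i ∈ B l K, ψ l (X i ω)
            ∈ Set.Iio (m0 - ε1))).card : ℝ) := Nat.cast_le.2 hmono
      linarith
    have hlow2 : m2 - ε2 ≤ medψ2 l ω := by
      by_contra hcon
      push_neg at hcon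
      apply h3
      have hmono : (Finset.univ.filter (fun K =>
            ((B l K).card : ℝ)⁻¹ * ∑ i ∈ B l K, ψ l (X i ω) ^ 2 ≤ medψ2 l ω)).card
          ≤ (Finset.univ.filter (fun K =>
            ((B l K).card : ℝ)⁻¹ * ∑ i ∈ B l K, (fun x => ψ l x ^ 2) (X i ω)
            ∈ Set.Iio (m2 - ε2))).card := by
        apply Finset.card_le_card
        apply Finset.monotone_filter_right
        intro K _ hK
        rw [Set.mem_Iio]
        simp only at hK ⊢
        linarith
      refine le_trans (hmedψ2 l ω).1 ?_
      have : ((Finset.univ.filter (fun K =>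
          ((B l K).card : ℝ)⁻¹ * ∑ i ∈ B l K, ψ l (X i ω) ^ 2 ≤ medψ2 l ω)).card : ℝ)
          ≤ ((Finset.univ.filter (fun K =>
            ((B l K).card : ℝ)⁻¹ * ∑ i ∈ B l K, (fun x => ψ l x ^ 2) (X i ω)
            ∈ Set.Iio (m2 - ε2))).card : ℝ) := Nat.cast_le.2 hmono
      linarith
    have habs : |medψ l ω - m0| ≤ ε1 := abs_le.2 ⟨by linarith, by linarith⟩
    -- variance bound
    have hvar_le : variance (ψ l) P ≤ m2 := by
      have h := variance_le_expectation_sq (μ := P) (X := ψ l) (hψ2 l).aestronglyMeasurable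
      have h2 : (∫ a, ((ψ l) ^ 2) a ∂P) = m2 := rfl
      rw [h2] at h
      exact h
    have hvarnn : 0 ≤ variance (ψ l) P := variance_nonneg _ _
    by_cases hm2z : m2 = 0
    · have hvz : variance (ψ l) P = 0 := le_antisymm (hm2z ▸ hvar_le) hvarnn
      have hε1z : ε1 = 0 := by rw [hε1, hvz, Real.sqrt_zero, mul_zero, zero_mul]
      rw [hε1z] at habs
      have hrhs : 0 ≤ (Real.sqrt 2 * L1) * Real.sqrt (medψ2 l ω) * sl := by positivity
      linarith [abs_nonneg (medψ l ω - m0)]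
    · have hm2pos : 0 < m2 := lt_of_le_of_ne
        (integral_nonneg fun x => sq_nonneg _) (Ne.symm hm2z)
      have hcd := hCD l hm2z
      have hε2le : ε2 ≤ m2 / 2 := by
        have h6 := mul_le_mul_of_nonneg_right hcd hm2pos.le
        have h7 : L1 * (Real.sqrt (variance (fun x => ψ l x ^ 2) P) / m2) * sl * m2
            = ε2 := by
          rw [hε2]
          field_simp
        rw [h7] at h6
        linarith
      have hmed2 : m2 / 2 ≤ medψ2 l ω := by linarith
      have hσle : Real.sqrt (variance (ψ l) P)
          ≤ Real.sqrt 2 * Real.sqrt (medψ2 l ω) := by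
        rw [← Real.sqrt_mul (by norm_num : (0 : ℝ) ≤ 2)]
        apply Real.sqrt_le_sqrt
        linarith
      calc |medψ l ω - m0| ≤ ε1 := habs
        _ = L1 * Real.sqrt (variance (ψ l) P) * sl := hε1
        _ ≤ L1 * (Real.sqrt 2 * Real.sqrt (medψ2 l ω)) * sl := by
            apply mul_le_mul_of_nonneg_right _ hslnn
            exact mul_le_mul_of_nonneg_left hσle hL1nn
        _ = (Real.sqrt 2 * L1) * Real.sqrt (medψ2 l ω) * sl := by ring
  -- union bound
  set G : Set Ω := {ω | ∀ l, |medψ l ω - ∫ x, ψ l x ∂P| ≤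
      (Real.sqrt 2 * L1) * Real.sqrt (medψ2 l ω) * Real.sqrt ((Vl l : ℝ) / n)} with hG
  have hsub : Gᶜ ⊆ ⋃ l, (Bad1 l ∪ Bad2 l ∪ Bad3 l) := by
    intro ω hω
    simp only [hG, Set.mem_compl_iff, Set.mem_setOf_eq, not_forall] at hω
    obtain ⟨l, hl⟩ := hω
    by_contra hnot
    simp only [Set.mem_iUnion, Set.mem_union, not_exists, not_or] at hnot
    obtain ⟨⟨hn1, hn2⟩, hn3⟩ := hnot l
    exact hl (hgood l ω hn1 hn2 hn3)
  have hμbad : μ Gᶜ ≤ ENNReal.ofReal δ := by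
    calc μ Gᶜ ≤ μ (⋃ l, (Bad1 l ∪ Bad2 l ∪ Bad3 l)) := measure_mono hsub
      _ ≤ ∑' l, μ (Bad1 l ∪ Bad2 l ∪ Bad3 l) := measure_iUnion_le _
      _ = ∑ l, μ (Bad1 l ∪ Bad2 l ∪ Bad3 l) := tsum_fintype _
      _ ≤ ∑ l, ENNReal.ofReal (π l * δ) := by
          refine Finset.sum_le_sum fun l _ => ?_
          calc μ (Bad1 l ∪ Bad2 l ∪ Bad3 l)
              ≤ μ (Bad1 l ∪ Bad2 l) + μ (Bad3 l) := measure_union_le _ _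
            _ ≤ (μ (Bad1 l) + μ (Bad2 l)) + μ (Bad3 l) := by
                exact add_le_add_left (measure_union_le _ _) _
            _ ≤ (ENNReal.ofReal (Real.exp (-(Vl l : ℝ)))
                  + ENNReal.ofReal (Real.exp (-(Vl l : ℝ))))
                  + ENNReal.ofReal (Real.exp (-(Vl l : ℝ))) := by
                exact add_le_add (add_le_add (hB1 l) (hB2 l)) (hB3 l)
            _ = ENNReal.ofReal (3 * Real.exp (-(Vl l : ℝ))) := by
                rw [← ENNReal.ofReal_add (Real.exp_nonneg _) (Real.exp_nonneg _),
                  ← ENNReal.ofReal_add (by positivity) (Real.exp_nonneg _)]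
                ring_nf
            _ ≤ ENNReal.ofReal (π l * δ) := ENNReal.ofReal_le_ofReal (hreal l)
      _ = ENNReal.ofReal (∑ l, π l * δ) :=
          (ENNReal.ofReal_sum_of_nonneg fun l _ => (mul_pos (hπpos l) hδ.1).le).symm
      _ = ENNReal.ofReal δ := by rw [← Finset.sum_mul, hπsum, one_mul]
  rw [tsub_le_iff_right]
  calc (1 : ℝ≥0∞) = μ Set.univ := measure_univ.symm
    _ = μ (G ∪ Gᶜ) := by rw [Set.union_compl_self]
    _ ≤ μ G + μ Gᶜ := measure_union_le _ _
    _ ≤ μ G + ENNReal.ofReal δ := add_le_add_right hμbad _
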